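/- Let A₀, A₁ be bounded self-adjoint operators on Hilbert spaces H₀, H₁ with spectra σ₀, σ₁ satisfying d := dist(σ₀, σ₁) > 0, and let B : H₁ → H₀, C : H₀ → H₁ be bounded with √(‖B‖‖C‖) < d/2. If λ ∈ ℂ satisfies dist(λ, σ₀ ∪ σ₁) > r_V, where r_V = √(‖B‖‖C‖) · tan((1/2) arcsin(2√(‖B‖‖C‖)/d)), and furthermore dist(Re λ, σ_i) ≥ d - r_V and dist(λ, σ_{1-i}) > r_V for some i ∈ {0,1}, then ‖B(A₁-λ)⁻¹C(A₀-λ)⁻¹‖ < 1 and hence λ belongs to the resolvent set of the block operator matrix L = [[A₀,B],[C,A₁]]. -/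

import Mathlib

set_option synthInstance.maxHeartbeats 1000000
set_option maxHeartbeats 1000000
set_option linter.unusedSectionVars false

open Pointwise

section Aux

lemma aux_trig {bc d rV : ℝ} (hbc : 0 ≤ bc) (hd : 0 < d)
    (h : Real.sqrt bc < d / 2)
    (hrV : rV = Real.sqrt bc *
      Real.tan (1 / 2 * Real.arcsin (2 * Real.sqrt bc / d))) :
    rV * (d - rV) = bc ∧ 0 ≤ rV ∧ rV < d / 2 := by
  set c := Real.sqrt bc with hc
  have hc0 : 0 ≤ c := Real.sqrt_nonneg bc
  have hbc' : c ^ 2 = bc := Real.sq_sqrt hbc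
  set x := 2 * c / d with hx
  have hx0 : 0 ≤ x := by positivity
  have hx1 : x < 1 := by
    rw [hx, div_lt_one hd]; linarith
  set θ := Real.arcsin x with hθ
  have hsin : Real.sin θ = x := Real.sin_arcsin (by linarith) hx1.le
  have hcos : Real.cos θ = Real.sqrt (1 - x ^ 2) := Real.cos_arcsin x
  set w := Real.sqrt (1 - x ^ 2) with hw
  have hw0 : 0 ≤ w := Real.sqrt_nonneg _
  have hw2 : w ^ 2 = 1 - x ^ 2 := Real.sq_sqrt (by nlinarith)
  have h1w : (0:ℝ) < 1 + w := by linarith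
  have hθ0 : 0 ≤ θ := Real.arcsin_nonneg.2 hx0
  have hθ2 : θ ≤ Real.pi / 2 := Real.arcsin_le_pi_div_two x
  have hφcos : 0 < Real.cos (1 / 2 * θ) := by
    apply Real.cos_pos_of_mem_Ioo
    constructor
    · nlinarith [Real.pi_pos]
    · nlinarith [Real.pi_pos]
  have htan : Real.tan (1 / 2 * θ) = x / (1 + w) := by
    have hsin' : Real.sin θ = 2 * Real.sin (1/2*θ) * Real.cos (1/2*θ) := by
      nth_rewrite 1 [show θ = 2 * (1 / 2 * θ) by ring]
      exact Real.sin_two_mul _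
    have hcos' : Real.cos θ = 2 * Real.cos (1/2*θ) ^ 2 - 1 := by
      nth_rewrite 1 [show θ = 2 * (1 / 2 * θ) by ring]
      exact Real.cos_two_mul _
    have hden : (0:ℝ) < 1 + (2 * Real.cos (1/2*θ)^2 - 1) := by nlinarith
    rw [Real.tan_eq_sin_div_cos, ← hsin, ← hcos, hsin', hcos',
      div_eq_div_iff hφcos.ne' hden.ne']
    ring
  have hrveq : rV = c * x / (1 + w) := by
    rw [hrV, htan]; ring
  have hrv0 : 0 ≤ rV := by
    rw [hrveq]; positivity
  rcases eq_or_lt_of_le hc0 with hcz | hcp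
  · have hbcz : bc = 0 := by nlinarith
    have hrvz : rV = 0 := by rw [hrveq, ← hcz]; ring
    exact ⟨by rw [hrvz, hbcz]; ring, hrv0, by linarith⟩
  · have hxd : x * d = 2 * c := by rw [hx]; field_simp
    have hrvlt : rV < d / 2 := by
      have h1 : rV ≤ c * x := by
        rw [hrveq]
        exact div_le_self (mul_nonneg hc0 hx0) (by linarith)
      have h2 : c * x < c * 1 := by
        exact mul_lt_mul_of_pos_left hx1 hcp
      linarith
    refine ⟨?_, hrv0, hrvlt⟩
    rw [hrveq, ← hbc']
    clear_value c x θ w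
    field_simp
    linear_combination (1+w) * hxd - c * hw2

lemma aux_le_infDist {α : Type*} [PseudoMetricSpace α] {x : α} {s : Set α}
    (hs : s.Nonempty) {r : ℝ} (h : ∀ y ∈ s, r ≤ dist x y) :
    r ≤ Metric.infDist x s := by
  rw [Metric.infDist_eq_iInf]
  haveI := hs.to_subtype
  exact le_ciInf fun y => h y y.2

lemma aux_resolvent {A : Type*} [CStarAlgebra A] {a : A} (ha : IsSelfAdjoint a)
    {lam : ℂ} (hl : lam ∉ spectrum ℂ a) :
    IsUnit (a - lam • 1) ∧
      ‖Ring.inverse (a - lam • 1)‖ * Metric.infDist lam (spectrum ℂ a) ≤ 1 := by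
  have halg : ∀ μ : ℂ, algebraMap ℂ A μ = μ • 1 := fun μ =>
    Algebra.algebraMap_eq_smul_one μ
  have hu0 : IsUnit (algebraMap ℂ A lam - a) := spectrum.notMem_iff.mp hl
  have hu : IsUnit (a - lam • 1) := by
    rw [← halg]
    simpa [neg_sub] using hu0.neg
  refine ⟨hu, ?_⟩
  obtain ⟨u, huu⟩ := hu
  have hstar : star (a - lam • 1) = a - (starRingEnd ℂ lam) • 1 := by
    simp [star_sub, star_smul, ha.star_eq, Complex.star_def]
  have hkey : ∀ μ ν : ℂ, Commute (a - μ • (1:A)) (a - ν • (1:A)) := by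
    intro μ ν
    have h1 : Commute a (ν • (1:A)) := (Commute.one_right a).smul_right ν
    have h2 : Commute (μ • (1:A)) a := ((Commute.one_left a).smul_left μ)
    have h3 : Commute (μ • (1:A)) (ν • (1:A)) :=
      ((Commute.one_right (1:A)).smul_left μ).smul_right ν
    exact ((Commute.refl a).sub_right h1).sub_left (h2.sub_right h3)
  have hcomm : Commute (↑u : A) (star ↑u) := by
    rw [huu, hstar]; exact hkey _ _
  let w : Aˣ := ⟨star ↑u, star ↑u⁻¹,
    by rw [← star_mul]; simp, by rw [← star_mul]; simp⟩
  have hwinv : (↑w⁻¹ : A) = star (↑u⁻¹ : A) := rfl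
  have hnormal : IsStarNormal (↑u⁻¹ : A) := by
    constructor
    have c1 : Commute (↑u⁻¹ : A) (↑w : A) := (hcomm.units_inv_left).symm.symm
    have c2 : Commute (↑u⁻¹ : A) (↑w⁻¹ : A) := c1.units_inv_right
    rw [← hwinv]
    exact c2.symm
  haveI := hnormal
  have hrinv : Ring.inverse (a - lam • 1) = (↑u⁻¹ : A) := by
    rw [← huu, Ring.inverse_unit]
  set δ := Metric.infDist lam (spectrum ℂ a) with hδ
  rcases le_or_gt δ 0 with hδ0 | hδ0
  · have : ‖Ring.inverse (a - lam • 1)‖ * δ ≤ 0 :=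
      mul_nonpos_of_nonneg_of_nonpos (norm_nonneg _) hδ0
    linarith
  · suffices hn : ‖(↑u⁻¹ : A)‖ ≤ δ⁻¹ by
      rw [hrinv]
      calc ‖(↑u⁻¹ : A)‖ * δ ≤ δ⁻¹ * δ :=
            mul_le_mul_of_nonneg_right hn hδ0.le
        _ = 1 := inv_mul_cancel₀ hδ0.ne'
    have hsp : spectralRadius ℂ (↑u⁻¹ : A) = (‖(↑u⁻¹ : A)‖₊ : ENNReal) :=
      IsStarNormal.spectralRadius_eq_nnnorm _
    have hbound : spectralRadius ℂ (↑u⁻¹ : A) ≤ ENNReal.ofReal δ⁻¹ := by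
      rw [spectralRadius]
      refine iSup₂_le fun k hk => ?_
      have hk' : k⁻¹ ∈ spectrum ℂ (↑u : A) := by
        rw [← spectrum.map_inv] at hk
        exact Set.mem_inv.mp hk
      have hmem : k⁻¹ ∈ spectrum ℂ a - ({lam} : Set ℂ) := by
        rw [spectrum.sub_singleton_eq a lam, halg lam, ← huu]
        exact hk'
      obtain ⟨μ, hμ, ν, hν, hkμ⟩ := Set.mem_sub.mp hmem
      rw [Set.mem_singleton_iff] at hν
      rw [hν] at hkμ
      have hdist : δ ≤ ‖k⁻¹‖ := by
        rw [← hkμ]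
        calc δ ≤ dist lam μ := Metric.infDist_le_dist_of_mem hμ
          _ = ‖μ - lam‖ := by rw [dist_comm, dist_eq_norm]
      have hknorm : ‖k‖ ≤ δ⁻¹ := by
        have h1 : ‖k⁻¹‖⁻¹ ≤ δ⁻¹ := inv_anti₀ hδ0 hdist
        rwa [norm_inv, inv_inv] at h1
      refine (le_of_eq (ofReal_norm k).symm).trans ?_
      exact ENNReal.ofReal_le_ofReal hknorm
    rw [hsp] at hbound
    have h2 := ENNReal.toReal_mono (by simp) hbound
    rwa [ENNReal.coe_toReal, coe_nnnorm, ENNReal.toReal_ofReal (by positivity)] at h2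

open ContinuousLinearMap

variable {H₀ H₁ : Type*}
    [NormedAddCommGroup H₀] [InnerProductSpace ℂ H₀] [CompleteSpace H₀]
    [NormedAddCommGroup H₁] [InnerProductSpace ℂ H₁] [CompleteSpace H₁]

noncomputable def blk (P : H₀ →L[ℂ] H₀) (Q : H₁ →L[ℂ] H₀)
    (R : H₀ →L[ℂ] H₁) (S : H₁ →L[ℂ] H₁) : (H₀ × H₁) →L[ℂ] (H₀ × H₁) :=
  (P.comp (fst ℂ H₀ H₁) + Q.comp (snd ℂ H₀ H₁)).prod
    (R.comp (fst ℂ H₀ H₁) + S.comp (snd ℂ H₀ H₁))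

lemma blk_apply (P : H₀ →L[ℂ] H₀) (Q : H₁ →L[ℂ] H₀)
    (R : H₀ →L[ℂ] H₁) (S : H₁ →L[ℂ] H₁) (x : H₀ × H₁) :
    blk P Q R S x = (P x.1 + Q x.2, R x.1 + S x.2) := rfl

lemma blk_mul (P P' : H₀ →L[ℂ] H₀) (Q Q' : H₁ →L[ℂ] H₀)
    (R R' : H₀ →L[ℂ] H₁) (S S' : H₁ →L[ℂ] H₁) :
    blk P Q R S * blk P' Q' R' S' =
      blk (P.comp P' + Q.comp R') (P.comp Q' + Q.comp S')
        (R.comp P' + S.comp R') (R.comp Q' + S.comp S') := by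
  ext x <;>
    simp [blk_apply, ContinuousLinearMap.mul_apply, map_add]

lemma blk_one : blk (1 : H₀ →L[ℂ] H₀) 0 0 (1 : H₁ →L[ℂ] H₁) = 1 := by
  ext x <;> simp [blk_apply]

lemma isUnit_blk_upper (X : H₁ →L[ℂ] H₀) : IsUnit (blk 1 X 0 1) := by
  refine ⟨⟨blk 1 X 0 1, blk 1 (-X) 0 1, ?_, ?_⟩, rfl⟩ <;>
    · rw [blk_mul, ← blk_one]
      congr 1 <;> simp [ContinuousLinearMap.one_def]

lemma isUnit_blk_lower (Y : H₀ →L[ℂ] H₁) : IsUnit (blk 1 0 Y 1) := by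
  refine ⟨⟨blk 1 0 Y 1, blk 1 0 (-Y) 1, ?_, ?_⟩, rfl⟩ <;>
    · rw [blk_mul, ← blk_one]
      congr 1 <;> simp [ContinuousLinearMap.one_def]

lemma isUnit_blk_diag {s : H₀ →L[ℂ] H₀} {e : H₁ →L[ℂ] H₁}
    (hs : IsUnit s) (he : IsUnit e) : IsUnit (blk s 0 0 e) := by
  obtain ⟨us, hus⟩ := hs
  obtain ⟨ue, hue⟩ := he
  refine ⟨⟨blk s 0 0 e, blk ↑us⁻¹ 0 0 ↑ue⁻¹, ?_, ?_⟩, rfl⟩ <;>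
    · rw [blk_mul, ← blk_one, ← hus, ← hue]
      congr 1 <;>
        simp [← ContinuousLinearMap.mul_def, ContinuousLinearMap.one_def]

lemma aux_factor (a : H₀ →L[ℂ] H₀) (e : H₁ →L[ℂ] H₁)
    (B : H₁ →L[ℂ] H₀) (C : H₀ →L[ℂ] H₁)
    (R₀ : H₀ →L[ℂ] H₀) (R₁ : H₁ →L[ℂ] H₁)
    (ha1 : R₀ * a = 1) (he1 : R₁ * e = 1) (he2 : e * R₁ = 1) :
    blk a B C e =
      blk 1 (B.comp R₁) 0 1 *
        (blk ((1 - B.comp (R₁.comp (C.comp R₀))) * a) 0 0 e *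
          blk 1 0 (R₁.comp C) 1) := by
  have hae : ∀ v : H₀, R₀ (a v) = v := fun v => by
    rw [← ContinuousLinearMap.mul_apply, ha1, ContinuousLinearMap.one_apply]
  have hre : ∀ v : H₁, R₁ (e v) = v := fun v => by
    rw [← ContinuousLinearMap.mul_apply, he1, ContinuousLinearMap.one_apply]
  have her : ∀ v : H₁, e (R₁ v) = v := fun v => by
    rw [← ContinuousLinearMap.mul_apply, he2, ContinuousLinearMap.one_apply]
  ext x <;>
    simp [blk_apply, ContinuousLinearMap.mul_apply, hae, hre, her, map_sub]

end Aux

open ContinuousLinearMap in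
theorem stmt15 {H₀ H₁ : Type*}
    [NormedAddCommGroup H₀] [InnerProductSpace ℂ H₀] [CompleteSpace H₀]
    [NormedAddCommGroup H₁] [InnerProductSpace ℂ H₁] [CompleteSpace H₁]
    (A₀ : H₀ →L[ℂ] H₀) (A₁ : H₁ →L[ℂ] H₁)
    (hA₀ : IsSelfAdjoint A₀) (hA₁ : IsSelfAdjoint A₁)
    (B : H₁ →L[ℂ] H₀) (C : H₀ →L[ℂ] H₁)
    (σ₀ σ₁ : Set ℂ) (hσ₀ : σ₀ = spectrum ℂ A₀) (hσ₁ : σ₁ = spectrum ℂ A₁)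
    (d : ℝ) (hd : d = sInf (Set.image2 dist σ₀ σ₁)) (hdpos : 0 < d)
    (hBC : Real.sqrt (‖B‖ * ‖C‖) < d / 2)
    (rV : ℝ)
    (hrV : rV = Real.sqrt (‖B‖ * ‖C‖) *
      Real.tan (1 / 2 * Real.arcsin (2 * Real.sqrt (‖B‖ * ‖C‖) / d)))
    (lam : ℂ) (hfar : rV < Metric.infDist lam (σ₀ ∪ σ₁))
    (hcase :
      (d - rV ≤ Metric.infDist (lam.re : ℂ) σ₀ ∧ rV < Metric.infDist lam σ₁) ∨
      (d - rV ≤ Metric.infDist (lam.re : ℂ) σ₁ ∧ rV < Metric.infDist lam σ₀)) :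
    ‖B.comp ((Ring.inverse (A₁ - lam • 1)).comp
        (C.comp (Ring.inverse (A₀ - lam • 1))))‖ < 1 ∧
      lam ∉ spectrum ℂ
        (((A₀.comp (ContinuousLinearMap.fst ℂ H₀ H₁)) +
            (B.comp (ContinuousLinearMap.snd ℂ H₀ H₁))).prod
          ((C.comp (ContinuousLinearMap.fst ℂ H₀ H₁)) +
            (A₁.comp (ContinuousLinearMap.snd ℂ H₀ H₁)))) := by
  have hbc0 : 0 ≤ ‖B‖ * ‖C‖ := mul_nonneg (norm_nonneg _) (norm_nonneg _)
  obtain ⟨hident, hrV0, hrVlt⟩ := aux_trig hbc0 hdpos hBC hrV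
  -- spectra are nonempty
  have hσ₀ne : σ₀.Nonempty := by
    by_contra hne
    rw [Set.not_nonempty_iff_eq_empty] at hne
    rw [hne, Set.image2_empty_left, Real.sInf_empty] at hd
    linarith
  have hσ₁ne : σ₁.Nonempty := by
    by_contra hne
    rw [Set.not_nonempty_iff_eq_empty] at hne
    rw [hne, Set.image2_empty_right, Real.sInf_empty] at hd
    linarith
  set d₀ := Metric.infDist lam σ₀ with hd₀
  set d₁ := Metric.infDist lam σ₁ with hd₁
  have h0 : rV < d₀ := lt_of_lt_of_le hfar
    (Metric.infDist_le_infDist_of_subset Set.subset_union_left hσ₀ne)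
  have h1 : rV < d₁ := lt_of_lt_of_le hfar
    (Metric.infDist_le_infDist_of_subset Set.subset_union_right hσ₁ne)
  have hd₀pos : 0 < d₀ := lt_of_le_of_lt hrV0 h0
  have hd₁pos : 0 < d₁ := lt_of_le_of_lt hrV0 h1
  -- lam outside both spectra
  have hl0 : lam ∉ spectrum ℂ A₀ := by
    have hcl : IsClosed σ₀ := by rw [hσ₀]; exact spectrum.isClosed A₀
    rw [← hσ₀]
    exact (hcl.notMem_iff_infDist_pos hσ₀ne).mpr hd₀pos
  have hl1 : lam ∉ spectrum ℂ A₁ := by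
    have hcl : IsClosed σ₁ := by rw [hσ₁]; exact spectrum.isClosed A₁
    rw [← hσ₁]
    exact (hcl.notMem_iff_infDist_pos hσ₁ne).mpr hd₁pos
  obtain ⟨hu0, hb0⟩ := aux_resolvent hA₀ hl0
  obtain ⟨hu1, hb1⟩ := aux_resolvent hA₁ hl1
  rw [← hσ₀] at hb0
  rw [← hσ₁] at hb1
  -- real-part distances
  have hre0 : Metric.infDist (↑lam.re : ℂ) σ₀ ≤ d₀ := by
    apply aux_le_infDist hσ₀ne
    intro μ hμ
    have hμre : μ = ↑μ.re := by
      rw [hσ₀] at hμ; exact hA₀.mem_spectrum_eq_re hμ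
    calc Metric.infDist (↑lam.re : ℂ) σ₀ ≤ dist (↑lam.re : ℂ) μ :=
          Metric.infDist_le_dist_of_mem hμ
      _ ≤ dist lam μ := by
          rw [hμre, Complex.dist_eq, Complex.dist_eq]
          have h := Complex.abs_re_le_norm (lam - ↑μ.re)
          simp only [Complex.sub_re, Complex.ofReal_re] at h
          calc ‖(↑lam.re - ↑μ.re : ℂ)‖ = |lam.re - μ.re| := by
                rw [← Complex.ofReal_sub, Complex.norm_real, Real.norm_eq_abs]
            _ ≤ ‖lam - ↑μ.re‖ := h
  have hre1 : Metric.infDist (↑lam.re : ℂ) σ₁ ≤ d₁ := by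
    apply aux_le_infDist hσ₁ne
    intro μ hμ
    have hμre : μ = ↑μ.re := by
      rw [hσ₁] at hμ; exact hA₁.mem_spectrum_eq_re hμ
    calc Metric.infDist (↑lam.re : ℂ) σ₁ ≤ dist (↑lam.re : ℂ) μ :=
          Metric.infDist_le_dist_of_mem hμ
      _ ≤ dist lam μ := by
          rw [hμre, Complex.dist_eq, Complex.dist_eq]
          have h := Complex.abs_re_le_norm (lam - ↑μ.re)
          simp only [Complex.sub_re, Complex.ofReal_re] at h
          calc ‖(↑lam.re - ↑μ.re : ℂ)‖ = |lam.re - μ.re| := by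
                rw [← Complex.ofReal_sub, Complex.norm_real, Real.norm_eq_abs]
            _ ≤ ‖lam - ↑μ.re‖ := h
  -- key product bound
  have hprod : ‖B‖ * ‖C‖ < d₀ * d₁ := by
    rcases hcase with ⟨hA, hB'⟩ | ⟨hA, hB'⟩
    · have hA' : d - rV ≤ d₀ := le_trans hA hre0
      calc ‖B‖ * ‖C‖ = rV * (d - rV) := hident.symm
        _ < d₁ * (d - rV) := by
            apply mul_lt_mul_of_pos_right hB' (by linarith)
        _ ≤ d₁ * d₀ := mul_le_mul_of_nonneg_left hA' hd₁pos.le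
        _ = d₀ * d₁ := mul_comm _ _
    · have hA' : d - rV ≤ d₁ := le_trans hA hre1
      calc ‖B‖ * ‖C‖ = rV * (d - rV) := hident.symm
        _ < d₀ * (d - rV) := by
            apply mul_lt_mul_of_pos_right hB' (by linarith)
        _ ≤ d₀ * d₁ := mul_le_mul_of_nonneg_left hA' hd₀pos.le
  -- part 1: norm bound
  set R₀ := Ring.inverse (A₀ - lam • (1 : H₀ →L[ℂ] H₀)) with hR₀
  set R₁ := Ring.inverse (A₁ - lam • (1 : H₁ →L[ℂ] H₁)) with hR₁
  have hKnorm : ‖B.comp (R₁.comp (C.comp R₀))‖ < 1 := by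
    have hle : ‖B.comp (R₁.comp (C.comp R₀))‖ ≤ ‖B‖ * (‖R₁‖ * (‖C‖ * ‖R₀‖)) := by
      refine le_trans (opNorm_comp_le _ _) ?_
      refine mul_le_mul_of_nonneg_left ?_ (norm_nonneg B)
      refine le_trans (opNorm_comp_le _ _) ?_
      exact mul_le_mul_of_nonneg_left (opNorm_comp_le _ _) (norm_nonneg R₁)
    refine lt_of_le_of_lt hle ?_
    have hxy : 0 ≤ ‖R₁‖ * ‖R₀‖ := mul_nonneg (norm_nonneg _) (norm_nonneg _)
    have hXY : (‖R₁‖ * ‖R₀‖) * (d₀ * d₁) ≤ 1 := by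
      have h3 : (‖R₁‖ * d₁) * (‖R₀‖ * d₀) ≤ 1 * 1 :=
        mul_le_mul hb1 hb0 (mul_nonneg (norm_nonneg _) hd₀pos.le) (by linarith)
      nlinarith
    rcases eq_or_lt_of_le hxy with hz | hz
    · have : ‖B‖ * (‖R₁‖ * (‖C‖ * ‖R₀‖)) = (‖B‖ * ‖C‖) * (‖R₁‖ * ‖R₀‖) := by ring
      rw [this, ← hz, mul_zero]; norm_num
    · have h4 : (‖B‖ * ‖C‖) * (‖R₁‖ * ‖R₀‖) < (d₀ * d₁) * (‖R₁‖ * ‖R₀‖) :=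
        mul_lt_mul_of_pos_right hprod hz
      have h5 : (d₀ * d₁) * (‖R₁‖ * ‖R₀‖) ≤ 1 := by linarith [hXY]
      calc ‖B‖ * (‖R₁‖ * (‖C‖ * ‖R₀‖)) = (‖B‖ * ‖C‖) * (‖R₁‖ * ‖R₀‖) := by ring
        _ < (d₀ * d₁) * (‖R₁‖ * ‖R₀‖) := h4
        _ ≤ 1 := h5
  refine ⟨hKnorm, ?_⟩
  -- part 2
  rw [spectrum.notMem_iff]
  show IsUnit (algebraMap ℂ ((H₀ × H₁) →L[ℂ] (H₀ × H₁)) lam - blk A₀ B C A₁)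
  have hneg : algebraMap ℂ ((H₀ × H₁) →L[ℂ] (H₀ × H₁)) lam - blk A₀ B C A₁
      = -(blk (A₀ - lam • 1) B C (A₁ - lam • 1)) := by
    rw [Algebra.algebraMap_eq_smul_one]
    ext x <;>
      simp [blk_apply, Prod.smul_def, ContinuousLinearMap.smul_apply,
        ContinuousLinearMap.one_apply, sub_apply] <;> abel
  have ha1 : R₀ * (A₀ - lam • 1) = 1 := Ring.inverse_mul_cancel _ hu0
  have he1 : R₁ * (A₁ - lam • 1) = 1 := Ring.inverse_mul_cancel _ hu1
  have he2 : (A₁ - lam • 1) * R₁ = 1 := Ring.mul_inverse_cancel _ hu1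
  have hsunit : IsUnit ((1 - B.comp (R₁.comp (C.comp R₀))) * (A₀ - lam • 1)) :=
    (isUnit_one_sub_of_norm_lt_one hKnorm).mul hu0
  have hblk : IsUnit (blk (A₀ - lam • 1) B C (A₁ - lam • 1)) := by
    rw [aux_factor (A₀ - lam • 1) (A₁ - lam • 1) B C R₀ R₁ ha1 he1 he2]
    exact (isUnit_blk_upper _).mul ((isUnit_blk_diag hsunit hu1).mul (isUnit_blk_lower _))
  rw [hneg]
  exact hblk.neg
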